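/- (Lemma 'ELtransverse', matrix/chart version) Let γ : ℝ × E → 𝔄 be continuous and differentiable in the E-variable, and let g : ℝ × E → 𝔄 be twice continuously differentiable with g(t,x) invertible for all (t,x) and ∂_t g(t,x) = g(t,x)·γ(t,x). Then for every one-form A : E → (E →L[ℝ] 𝔄), every (t,x) ∈ ℝ × E and every v ∈ E, the function t ↦ A^{g_t}(x)v is differentiable and ∂_t(A^{g_t}(x)v) = (D_x γ(t,·))(x)v + [A^{g_t}(x)v, γ(t,x)]; that is, (d/dt) A^{g_t} = d_{A^{g_t}} γ_t. -/

import Mathlib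

open Filter Topology

/-- Derivative of the pointwise `Ring.inverse` of a differentiable unit-valued path,
without any completeness assumption on the algebra. -/
lemma hasDerivAt_ringInverse_comp {𝔄 : Type*} [NormedRing 𝔄] [NormedAlgebra ℝ 𝔄]
    {G : ℝ → 𝔄} {G' : 𝔄} {t : ℝ} (hG : HasDerivAt G G' t) (hu : ∀ s, IsUnit (G s)) :
    HasDerivAt (fun s => Ring.inverse (G s))
      (-(Ring.inverse (G t) * G' * Ring.inverse (G t))) t := by
  rcases subsingleton_or_nontrivial 𝔄 with h | h
  · have h1 : (fun s => Ring.inverse (G s)) = fun _ => Ring.inverse (G t) :=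
      funext fun _ => Subsingleton.elim _ _
    rw [h1]
    have h2 : (-(Ring.inverse (G t) * G' * Ring.inverse (G t))) = 0 := Subsingleton.elim _ _
    rw [h2]
    exact hasDerivAt_const t _
  · set u : ℝ → 𝔄 := fun s => Ring.inverse (G s) with hudef
    have key : ∀ s, u s - u t = u s * (G t - G s) * u t := by
      intro s
      have h1 : u s * G s = 1 := Ring.inverse_mul_cancel _ (hu s)
      have h2 : G t * u t = 1 := Ring.mul_inverse_cancel _ (hu t)
      have h3 : u s * (G t - G s) * u t = u s * (G t * u t) - u s * G s * u t := by
        noncomm_ring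
      rw [h3, h2, mul_one, h1, one_mul]
    -- continuity of u at t
    have hK : (0:ℝ) < ‖u t‖ := by
      have : u t ≠ 0 := by
        intro h0
        have h2 : G t * u t = 1 := Ring.mul_inverse_cancel _ (hu t)
        rw [h0, mul_zero] at h2
        exact one_ne_zero h2.symm
      simpa [norm_pos_iff] using this
    have hGc : Tendsto (fun s => ‖G s - G t‖) (𝓝 t) (𝓝 0) :=
      tendsto_iff_norm_sub_tendsto_zero.mp hG.continuousAt.tendsto
    have hev : ∀ᶠ s in 𝓝 t, ‖G s - G t‖ ≤ (2 * ‖u t‖)⁻¹ := by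
      exact hGc.eventually_le_const (show (0:ℝ) < (2 * ‖u t‖)⁻¹ by positivity)
    have hbound : ∀ᶠ s in 𝓝 t, ‖u s - u t‖ ≤ 2 * ‖u t‖ ^ 2 * ‖G s - G t‖ := by
      filter_upwards [hev] with s hs
      have hd : ‖u s - u t‖ ≤ ‖u s‖ * ‖G s - G t‖ * ‖u t‖ := by
        rw [key s]
        calc ‖u s * (G t - G s) * u t‖ ≤ ‖u s * (G t - G s)‖ * ‖u t‖ := norm_mul_le _ _
          _ ≤ ‖u s‖ * ‖G t - G s‖ * ‖u t‖ := by
              gcongr; exact norm_mul_le _ _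
          _ = ‖u s‖ * ‖G s - G t‖ * ‖u t‖ := by rw [norm_sub_rev]
      have hus : ‖u s‖ ≤ ‖u t‖ + ‖u s - u t‖ := by
        calc ‖u s‖ = ‖u t + (u s - u t)‖ := by congr 1; abel
          _ ≤ ‖u t‖ + ‖u s - u t‖ := norm_add_le _ _
      have hsmall : ‖u s - u t‖ ≤ ‖u t‖ := by
        by_contra hc
        push_neg at hc
        have h5 : ‖u s - u t‖ ≤ (‖u t‖ + ‖u s - u t‖) * (2 * ‖u t‖)⁻¹ * ‖u t‖ := by
          calc ‖u s - u t‖ ≤ ‖u s‖ * ‖G s - G t‖ * ‖u t‖ := hd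
            _ ≤ (‖u t‖ + ‖u s - u t‖) * (2 * ‖u t‖)⁻¹ * ‖u t‖ := by
                gcongr <;> first | exact norm_nonneg _ | exact hus | exact hs
        have h6 : (‖u t‖ + ‖u s - u t‖) * (2 * ‖u t‖)⁻¹ * ‖u t‖
            = (‖u t‖ + ‖u s - u t‖) / 2 := by
          field_simp
        rw [h6] at h5
        linarith
      have hus2 : ‖u s‖ ≤ 2 * ‖u t‖ := by linarith
      calc ‖u s - u t‖ ≤ ‖u s‖ * ‖G s - G t‖ * ‖u t‖ := hd
        _ ≤ (2 * ‖u t‖) * ‖G s - G t‖ * ‖u t‖ := by gcongr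
        _ = 2 * ‖u t‖ ^ 2 * ‖G s - G t‖ := by ring
    have hucont : Tendsto u (𝓝 t) (𝓝 (u t)) := by
      rw [tendsto_iff_norm_sub_tendsto_zero]
      apply squeeze_zero' (Eventually.of_forall fun s => norm_nonneg _) hbound
      have : Tendsto (fun s => 2 * ‖u t‖ ^ 2 * ‖G s - G t‖) (𝓝 t) (𝓝 (2 * ‖u t‖ ^ 2 * 0)) :=
        hGc.const_mul _
      simpa using this
    -- slope computation
    rw [hasDerivAt_iff_tendsto_slope]
    have hslope : slope u t = fun s => u s * (-(slope G t s)) * u t := by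
      funext s
      rw [slope_def_module, slope_def_module, key s, ← smul_neg, neg_sub]
      simp only [mul_smul_comm, smul_mul_assoc]
    rw [hslope]
    have hGs : Tendsto (slope G t) (𝓝[≠] t) (𝓝 G') := hasDerivAt_iff_tendsto_slope.mp hG
    have h7 : Tendsto (fun s => u s * (-(slope G t s)) * u t) (𝓝[≠] t)
        (𝓝 (u t * (-G') * u t)) :=
      ((hucont.mono_left nhdsWithin_le_nhds).mul hGs.neg).mul tendsto_const_nhds
    convert h7 using 2
    simp [mul_neg, neg_mul]
    rfl

/-- The noncommutative-ring identity used to assemble the final derivative. -/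
lemma alg_id9 {𝔄 : Type*} [NormedRing 𝔄] (u a G F γ₀ d : 𝔄) (h : u * G = 1) :
    d + ((u * a * G + u * F) * γ₀ - γ₀ * (u * a * G + u * F))
      = (-(γ₀ * u) * a * G + u * a * (G * γ₀)) + (-(γ₀ * u) * F + u * (G * d + F * γ₀)) := by
  have e1 : u * (G * d + F * γ₀) = d + u * (F * γ₀) := by
    rw [mul_add, ← mul_assoc, h, one_mul]
  rw [e1]
  noncomm_ring

/-- The gauge transform `A^{g_t}(x)v = g⁻¹ (A(x)v) g + g⁻¹ (D_x g_t)(x)v` of a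
`𝔤`-valued one-form `A` on a chart `E` by a time-dependent group-valued map `g`. -/
noncomputable def gaugeTransform {𝔄 E : Type*} [NormedRing 𝔄] [NormedAlgebra ℝ 𝔄]
    [NormedAddCommGroup E] [NormedSpace ℝ E]
    (g : ℝ × E → 𝔄) (A : E → (E →L[ℝ] 𝔄)) (t : ℝ) (x : E) (v : E) : 𝔄 :=
  Ring.inverse (g (t, x)) * (A x v) * g (t, x)
    + Ring.inverse (g (t, x)) * (fderiv ℝ (fun y => g (t, y)) x v)

/-- **Lemma `ELtransverse` (matrix/chart version).**  Let `γ : ℝ × E → 𝔄` be continuous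
and differentiable in the `E`-variable, and let `g : ℝ × E → 𝔄` be `C²` with invertible
values and `∂ₜ g = g·γ` (i.e. `g_t = Pexp(∫₀ᵗ γ_s ds)·g₀`).  Then for every one-form
`A : E → (E →L[ℝ] 𝔄)`, every `(t,x)` and every `v ∈ E`,
`∂ₜ (A^{g_t}(x)v) = (D_x γ_t)(x)v + [A^{g_t}(x)v, γ(t,x)]`, i.e.
`(d/dt) A^{g_t} = d_{A^{g_t}} γ_t`. -/
theorem stmt9
    {𝔄 : Type*} [NormedRing 𝔄] [NormedAlgebra ℝ 𝔄]
    {E : Type*} [NormedAddCommGroup E] [NormedSpace ℝ E]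
    (γ g : ℝ × E → 𝔄)
    (hγcont : Continuous γ)
    (hγdiff : ∀ t : ℝ, Differentiable ℝ (fun x : E => γ (t, x)))
    (hg : ContDiff ℝ 2 g)
    (hgunit : ∀ p : ℝ × E, IsUnit (g p))
    (hgflow : ∀ (t : ℝ) (x : E), HasDerivAt (fun s => g (s, x)) (g (t, x) * γ (t, x)) t)
    (A : E → (E →L[ℝ] 𝔄)) (t : ℝ) (x : E) (v : E) :
    HasDerivAt (fun s : ℝ => gaugeTransform g A s x v)
      (fderiv ℝ (fun y => γ (t, y)) x v
        + (gaugeTransform g A t x v * γ (t, x) - γ (t, x) * gaugeTransform g A t x v))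
      t := by
  have hgdiff : Differentiable ℝ g := hg.differentiable (by norm_num)
  set Φ : ℝ × E → (ℝ × E) →L[ℝ] 𝔄 := fderiv ℝ g with hΦdef
  have hΦdiff : Differentiable ℝ Φ := (hg.fderiv_right (m := 1) (by norm_num)).differentiable (by norm_num)
  -- value of Φ on (1,0) is the time derivative
  have hΦ10 : ∀ p : ℝ × E, Φ p ((1:ℝ), (0:E)) = g p * γ p := by
    intro p
    have hc : HasDerivAt (fun s : ℝ => ((s, p.2) : ℝ × E)) ((1:ℝ), (0:E)) p.1 :=
      (hasDerivAt_id p.1).prodMk (hasDerivAt_const p.1 p.2)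
    have h1 : HasDerivAt (fun s => g (s, p.2)) (Φ p ((1:ℝ), (0:E))) p.1 := by
      have := ((hgdiff p).hasFDerivAt).comp_hasDerivAt p.1 hc
      simpa [Function.comp_def] using this
    exact h1.unique (hgflow p.1 p.2)
  -- the vertical inclusion
  have hincl : ∀ (s : ℝ) (y : E), HasFDerivAt (fun z : E => ((s, z) : ℝ × E))
      ((0 : E →L[ℝ] ℝ).prod (ContinuousLinearMap.id ℝ E)) y :=
    fun s y => (hasFDerivAt_const s y).prodMk (hasFDerivAt_id y)
  -- partial x-derivative as Φ applied to (0,v)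
  have hFs : ∀ s : ℝ, fderiv ℝ (fun y => g (s, y)) x v = Φ (s, x) ((0:ℝ), v) := by
    intro s
    have h2 : HasFDerivAt (fun y => g (s, y))
        ((Φ (s, x)).comp ((0 : E →L[ℝ] ℝ).prod (ContinuousLinearMap.id ℝ E))) x :=
      ((hgdiff (s, x)).hasFDerivAt).comp x (hincl s x)
    rw [h2.fderiv]
    simp
  -- derivative of s ↦ Φ (s,x) (0,v)
  have hΦt : HasDerivAt (fun s => Φ (s, x)) (fderiv ℝ Φ (t, x) ((1:ℝ), (0:E))) t := by
    have hc : HasDerivAt (fun s : ℝ => ((s, x) : ℝ × E)) ((1:ℝ), (0:E)) t :=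
      (hasDerivAt_id t).prodMk (hasDerivAt_const t x)
    have := ((hΦdiff (t, x)).hasFDerivAt).comp_hasDerivAt t hc
    simpa [Function.comp_def] using this
  have hFd : HasDerivAt (fun s => Φ (s, x) ((0:ℝ), v))
      (fderiv ℝ Φ (t, x) ((1:ℝ), (0:E)) ((0:ℝ), v)) t := by
    have := (ContinuousLinearMap.apply ℝ 𝔄 (((0:ℝ), v) : ℝ × E)).hasFDerivAt.comp_hasDerivAt t hΦt
    simpa [Function.comp_def] using this
  -- symmetry of the second derivative
  have hsymm : fderiv ℝ Φ (t, x) ((1:ℝ), (0:E)) ((0:ℝ), v)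
      = fderiv ℝ Φ (t, x) ((0:ℝ), v) ((1:ℝ), (0:E)) :=
    second_derivative_symmetric (fun p => (hgdiff p).hasFDerivAt)
      ((hΦdiff (t, x)).hasFDerivAt) _ _
  -- identify the symmetric term with the x-derivative of g·γ
  have hψ : HasFDerivAt (fun p : ℝ × E => Φ p ((1:ℝ), (0:E)))
      ((ContinuousLinearMap.apply ℝ 𝔄 (((1:ℝ), (0:E)) : ℝ × E)).comp (fderiv ℝ Φ (t, x))) (t, x) := by
    exact (ContinuousLinearMap.apply ℝ 𝔄 _).hasFDerivAt.comp (t, x) (hΦdiff (t, x)).hasFDerivAt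
  have hψx : fderiv ℝ (fun y => Φ (t, y) ((1:ℝ), (0:E))) x v
      = fderiv ℝ Φ (t, x) ((0:ℝ), v) ((1:ℝ), (0:E)) := by
    have h3 : HasFDerivAt (fun y => Φ (t, y) ((1:ℝ), (0:E)))
        ((((ContinuousLinearMap.apply ℝ 𝔄 (((1:ℝ), (0:E)) : ℝ × E)).comp
          (fderiv ℝ Φ (t, x))).comp ((0 : E →L[ℝ] ℝ).prod (ContinuousLinearMap.id ℝ E)))) x := by
      exact hψ.comp x (hincl t x)
    rw [h3.fderiv]
    simp
  have hgt : ∀ y, HasFDerivAt (fun y' => g (t, y'))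
      ((Φ (t, y)).comp ((0 : E →L[ℝ] ℝ).prod (ContinuousLinearMap.id ℝ E))) y :=
    fun y => ((hgdiff (t, y)).hasFDerivAt).comp y (hincl t y)
  have hmulval : fderiv ℝ (fun y => Φ (t, y) ((1:ℝ), (0:E))) x v
      = g (t, x) * (fderiv ℝ (fun y => γ (t, y)) x v)
        + (fderiv ℝ (fun y => g (t, y)) x v) * γ (t, x) := by
    have heq : (fun y => Φ (t, y) ((1:ℝ), (0:E))) = fun y => g (t, y) * γ (t, y) :=
      funext fun y => hΦ10 (t, y)
    rw [heq]
    have h4 := ((hgt x).mul' ((hγdiff t x).hasFDerivAt))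
    change fderiv ℝ ((fun y' => g (t, y')) * fun x => γ (t, x)) x v = _
    rw [h4.fderiv, (hgt x).fderiv]
    simp [smul_eq_mul]
  -- the x-derivative of g_t, as a function of time, has a time derivative
  have hF : HasDerivAt (fun s => fderiv ℝ (fun y => g (s, y)) x v)
      (g (t, x) * (fderiv ℝ (fun y => γ (t, y)) x v)
        + (fderiv ℝ (fun y => g (t, y)) x v) * γ (t, x)) t := by
    have h5 : (fun s => fderiv ℝ (fun y => g (s, y)) x v) = fun s => Φ (s, x) ((0:ℝ), v) :=
      funext hFs
    rw [h5, ← hmulval, hψx, ← hsymm]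
    exact hFd
  -- derivative of the inverse
  have hG : HasDerivAt (fun s => g (s, x)) (g (t, x) * γ (t, x)) t := hgflow t x
  have huG : Ring.inverse (g (t, x)) * g (t, x) = 1 :=
    Ring.inverse_mul_cancel _ (hgunit (t, x))
  have huD : HasDerivAt (fun s => Ring.inverse (g (s, x)))
      (-(γ (t, x) * Ring.inverse (g (t, x)))) t := by
    have := hasDerivAt_ringInverse_comp hG (fun s => hgunit (s, x))
    have he : -(Ring.inverse (g (t, x)) * (g (t, x) * γ (t, x)) * Ring.inverse (g (t, x)))
        = -(γ (t, x) * Ring.inverse (g (t, x))) := by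
      rw [← mul_assoc, huG, one_mul]
    rwa [he] at this
  -- assemble
  have h1 := (huD.mul_const (A x v)).mul hG
  have h2 := huD.mul hF
  have hsum := h1.add h2
  simp only [gaugeTransform]
  rw [alg_id9 (Ring.inverse (g (t, x))) (A x v) (g (t, x))
    (fderiv ℝ (fun y => g (t, y)) x v) (γ (t, x)) (fderiv ℝ (fun y => γ (t, y)) x v) huG]
  exact hsum
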